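/- Consider K devices, where device k holds D_k differentiable sample losses f_{k,i} : ℝ^d → ℝ (i = 1,…,D_k); let F_k = (1/D_k)Σ_i f_{k,i} be the local loss, D = Σ_k D_k, and F = (1/D)Σ_k Σ_i f_{k,i} the global loss. Assume: F is differentiable with L-Lipschitz gradient (L > 0); F satisfies the Polyak–Łojasiewicz inequality ‖∇F(u)‖² ≥ 2δ(F(u) − F*) with 0 < δ ≤ L, where F* ∈ ℝ satisfies F* ≤ F(u) for all u; and ‖∇f_{k,i}(u)‖² ≤ ε for all u, k, i. For t = 1,…,T let S_t ⊆ {1,…,K} be a nonempty set of scheduled devices and update w_t = w_{t−1} − (1/L)·(Σ_{k∈S_t} D_k ∇F_k(w_{t−1}))/(Σ_{k∈S_t} D_k). Then F(w_T) − F* ≤ (1 − δ/L)^T (F(w_0) − F*) + Σ_{t=1}^T A_t (1 − δ/L)^{T−t}, where A_t = (2ε/(L D²))·(Σ_{k∉S_t} D_k)². -/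

import Mathlib

open Finset
open InnerProductSpace

lemma gradient_finset_sum' {d : ℕ} {ι : Type*} (s : Finset ι) (g : ι → EuclideanSpace ℝ (Fin d) → ℝ)
    (u : EuclideanSpace ℝ (Fin d)) (hg : ∀ i ∈ s, DifferentiableAt ℝ (g i) u) :
    gradient (fun x => ∑ i ∈ s, g i x) u = ∑ i ∈ s, gradient (g i) u := by
  have h : HasFDerivAt (fun x => ∑ i ∈ s, g i x) (∑ i ∈ s, fderiv ℝ (g i) u) u :=
    HasFDerivAt.fun_sum fun i hi => ((hg i hi).hasFDerivAt)
  have h2 : gradient (fun x => ∑ i ∈ s, g i x) u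
      = (toDual ℝ _).symm (∑ i ∈ s, fderiv ℝ (g i) u) := by
    unfold gradient; rw [h.fderiv]
  rw [h2, map_sum]; rfl

lemma gradient_const_mul' {d : ℕ} (c : ℝ) (g : EuclideanSpace ℝ (Fin d) → ℝ)
    (u : EuclideanSpace ℝ (Fin d)) (hg : DifferentiableAt ℝ g u) :
    gradient (fun x => c * g x) u = c • gradient g u := by
  have h : HasFDerivAt (fun x => c * g x) (c • fderiv ℝ g u) u := hg.hasFDerivAt.const_mul c
  have h2 : gradient (fun x => c * g x) u = (toDual ℝ _).symm (c • fderiv ℝ g u) := by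
    unfold gradient; rw [h.fderiv]
  rw [h2, map_smul]; rfl

lemma descent_lemma' {d : ℕ} (F : EuclideanSpace ℝ (Fin d) → ℝ) (hF : Differentiable ℝ F)
    (L : ℝ) (hlip : ∀ u v, ‖gradient F u - gradient F v‖ ≤ L * ‖u - v‖)
    (x y : EuclideanSpace ℝ (Fin d)) :
    F y ≤ F x + (inner ℝ (gradient F x) (y - x) : ℝ) + L / 2 * ‖y - x‖ ^ 2 := by
  set v := y - x with hv
  have key : ∀ s : ℝ, HasDerivAt (fun s : ℝ => F (x + s • v))
      ((inner ℝ (gradient F (x + s • v)) v : ℝ)) s := by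
    intro s
    have hline : HasDerivAt (fun s : ℝ => x + s • v) v s := by
      simpa using ((hasDerivAt_id s).smul_const v).const_add x
    have hf : HasFDerivAt F (toDual ℝ _ (gradient F (x + s • v))) (x + s • v) :=
      (hF _).hasGradientAt.hasFDerivAt
    have := hf.comp_hasDerivAt s hline
    simp only [toDual_apply_apply] at this
    exact this
  set c : ℝ := inner ℝ (gradient F x) v with hc
  set m : ℝ := L / 2 * ‖v‖ ^ 2 with hm
  set φ : ℝ → ℝ := fun s => F (x + s • v) - s * c - s ^ 2 * m with hφ
  have hφ' : ∀ s : ℝ, HasDerivAt φ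
      ((inner ℝ (gradient F (x + s • v)) v : ℝ) - c - 2 * s * m) s := by
    intro s
    have h1 : HasDerivAt (fun s : ℝ => s * c) c s := by
      simpa using (hasDerivAt_id s).mul_const c
    have h2 : HasDerivAt (fun s : ℝ => s ^ 2 * m) (2 * s * m) s := by
      have h := (hasDerivAt_pow 2 s).mul_const m
      have he : ((2:ℕ):ℝ) * s ^ (2-1) * m = 2 * s * m := by norm_num
      rw [he] at h
      exact h
    exact ((key s).sub h1).sub h2
  have hmono : AntitoneOn φ (Set.Icc (0:ℝ) 1) := by
    apply antitoneOn_of_deriv_nonpos (convex_Icc 0 1)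
    · exact fun s _ => ((hφ' s).differentiableAt).continuousAt.continuousWithinAt
    · exact fun s _ => ((hφ' s).differentiableAt).differentiableWithinAt
    · intro s hs
      rw [interior_Icc] at hs
      rw [(hφ' s).deriv]
      have hb : (inner ℝ (gradient F (x + s • v)) v : ℝ) - c ≤ L * s * ‖v‖ ^ 2 := by
        have h1 : (inner ℝ (gradient F (x + s • v)) v : ℝ) - c
            = (inner ℝ (gradient F (x + s • v) - gradient F x) v : ℝ) := by
          rw [hc, inner_sub_left]
        rw [h1]
        calc (inner ℝ (gradient F (x + s • v) - gradient F x) v : ℝ)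
            ≤ ‖gradient F (x + s • v) - gradient F x‖ * ‖v‖ := real_inner_le_norm _ _
          _ ≤ (L * ‖(x + s • v) - x‖) * ‖v‖ :=
              mul_le_mul_of_nonneg_right (hlip _ _) (norm_nonneg _)
          _ = L * s * ‖v‖ ^ 2 := by
              rw [add_sub_cancel_left, norm_smul]
              rw [Real.norm_eq_abs, abs_of_pos hs.1]
              ring
      have hmeq : 2 * s * m = L * s * ‖v‖ ^ 2 := by rw [hm]; ring
      linarith
  have h01 := hmono (Set.mem_Icc.mpr ⟨le_refl 0, zero_le_one⟩)
    (Set.mem_Icc.mpr ⟨zero_le_one, le_refl 1⟩) zero_le_one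
  have hφ0 : φ 0 = F x := by simp [hφ]
  have hφ1 : φ 1 = F y - c - m := by
    have h1 : x + (1:ℝ) • v = y := by rw [one_smul, hv]; abel
    simp only [hφ, h1, one_pow, one_mul]
  rw [hφ0, hφ1] at h01
  linarith


/-- Theorem 1 of the paper: optimality-gap bound of federated learning with partial
device scheduling. After `T` rounds with scheduled sets `S t` and learning rate `1/L`,
`F(w_T) - F* ≤ (1 - δ/L)^T (F(w_0) - F*) + Σ_{t=1}^T A_t (1 - δ/L)^{T-t}`, where
`A_t = (2ε/(L D²)) (Σ_{k ∉ S_t} D_k)²`. -/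
theorem fl_optimality_gap_bound
    (d K : ℕ) (Dk : Fin K → ℕ) (hDk : ∀ k, 0 < Dk k)
    (f : (k : Fin K) → Fin (Dk k) → EuclideanSpace ℝ (Fin d) → ℝ)
    (hfdiff : ∀ k i, Differentiable ℝ (f k i))
    (Floc : Fin K → EuclideanSpace ℝ (Fin d) → ℝ)
    (hFloc : ∀ k u, Floc k u = ((Dk k : ℝ))⁻¹ * ∑ i, f k i u)
    (Fglob : EuclideanSpace ℝ (Fin d) → ℝ)
    (hFglob : ∀ u, Fglob u = (∑ k, (Dk k : ℝ))⁻¹ * ∑ k, ∑ i, f k i u)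
    (L δ ε Fstar : ℝ) (hL : 0 < L) (hδ : 0 < δ) (hδL : δ ≤ L)
    (hFdiff : Differentiable ℝ Fglob)
    (hlip : ∀ u v : EuclideanSpace ℝ (Fin d),
      ‖gradient Fglob u - gradient Fglob v‖ ≤ L * ‖u - v‖)
    (hlow : ∀ u, Fstar ≤ Fglob u)
    (hPL : ∀ u, 2 * δ * (Fglob u - Fstar) ≤ ‖gradient Fglob u‖ ^ 2)
    (hgradbound : ∀ k i u, ‖gradient (f k i) u‖ ^ 2 ≤ ε)
    (T : ℕ) (S : ℕ → Finset (Fin K)) (hS : ∀ t, 1 ≤ t → t ≤ T → (S t).Nonempty)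
    (w : ℕ → EuclideanSpace ℝ (Fin d))
    (hw : ∀ t, 1 ≤ t → t ≤ T →
      w t = w (t - 1) - (1 / L) •
        ((∑ k ∈ S t, (Dk k : ℝ))⁻¹ •
          ∑ k ∈ S t, (Dk k : ℝ) • gradient (Floc k) (w (t - 1)))) :
    Fglob (w T) - Fstar
      ≤ (1 - δ / L) ^ T * (Fglob (w 0) - Fstar)
        + ∑ t ∈ Finset.Icc 1 T,
            ((2 * ε / (L * (∑ k, (Dk k : ℝ)) ^ 2)) * (∑ k ∈ (S t)ᶜ, (Dk k : ℝ)) ^ 2)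
              * (1 - δ / L) ^ (T - t) := by
  set Dtot : ℝ := ∑ k, (Dk k : ℝ) with hDtot
  have hr0 : 0 ≤ 1 - δ / L := by
    have : δ / L ≤ 1 := (div_le_one hL).mpr hδL
    linarith
  -- per-round inequality
  have key : ∀ t, 1 ≤ t → t ≤ T →
      Fglob (w t) - Fstar ≤ (1 - δ / L) * (Fglob (w (t - 1)) - Fstar)
        + (2 * ε / (L * Dtot ^ 2)) * (∑ k ∈ (S t)ᶜ, (Dk k : ℝ)) ^ 2 := by
    intro t ht1 htT
    set u := w (t - 1) with hu
    obtain ⟨k0, hk0⟩ := hS t ht1 htT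
    have hε0 : 0 ≤ ε := le_trans (sq_nonneg _) (hgradbound k0 ⟨0, hDk k0⟩ u)
    set B := Real.sqrt ε with hB
    have hB0 : 0 ≤ B := Real.sqrt_nonneg ε
    have hB2 : B ^ 2 = ε := Real.sq_sqrt hε0
    have hgB : ∀ k i, ‖gradient (f k i) u‖ ≤ B := by
      intro k i
      calc ‖gradient (f k i) u‖ = Real.sqrt (‖gradient (f k i) u‖ ^ 2) :=
            (Real.sqrt_sq (norm_nonneg _)).symm
        _ ≤ B := Real.sqrt_le_sqrt (hgradbound k i u)
    set G : Fin K → EuclideanSpace ℝ (Fin d) := fun k => ∑ i, gradient (f k i) u with hG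
    have hGnorm : ∀ k, ‖G k‖ ≤ (Dk k : ℝ) * B := by
      intro k
      calc ‖G k‖ ≤ ∑ i, ‖gradient (f k i) u‖ := norm_sum_le _ _
        _ ≤ ∑ _i : Fin (Dk k), B := Finset.sum_le_sum fun i _ => hgB k i
        _ = (Dk k : ℝ) * B := by simp [Finset.sum_const, nsmul_eq_mul]
    have hsumnorm : ∀ s : Finset (Fin K), ‖∑ k ∈ s, G k‖ ≤ (∑ k ∈ s, (Dk k : ℝ)) * B := by
      intro s
      calc ‖∑ k ∈ s, G k‖ ≤ ∑ k ∈ s, ‖G k‖ := norm_sum_le _ _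
        _ ≤ ∑ k ∈ s, (Dk k : ℝ) * B := Finset.sum_le_sum fun k _ => hGnorm k
        _ = _ := by rw [← Finset.sum_mul]
    have hgradFloc : ∀ k, gradient (Floc k) u = ((Dk k : ℝ))⁻¹ • G k := by
      intro k
      have h1 : Floc k = fun x => ((Dk k : ℝ))⁻¹ * ∑ i, f k i x := funext (hFloc k)
      rw [h1, gradient_const_mul' _ _ _ (DifferentiableAt.fun_sum fun i _ => (hfdiff k i).differentiableAt),
        gradient_finset_sum' _ _ _ (fun i _ => (hfdiff k i).differentiableAt)]
    have hgradF : gradient Fglob u = Dtot⁻¹ • ∑ k, G k := by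
      have h1 : Fglob = fun x => Dtot⁻¹ * ∑ k, (∑ i, f k i x) := funext hFglob
      rw [h1, gradient_const_mul' _ _ _
          (DifferentiableAt.fun_sum fun k _ =>
            (DifferentiableAt.fun_sum fun i _ => (hfdiff k i).differentiableAt)),
        gradient_finset_sum' _ _ _
          (fun k _ => DifferentiableAt.fun_sum fun i _ => (hfdiff k i).differentiableAt)]
      congr 1
      exact Finset.sum_congr rfl fun k _ =>
        gradient_finset_sum' _ _ _ (fun i _ => (hfdiff k i).differentiableAt)
    set DS : ℝ := ∑ k ∈ S t, (Dk k : ℝ) with hDS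
    set DC : ℝ := ∑ k ∈ (S t)ᶜ, (Dk k : ℝ) with hDC
    have hDSpos : 0 < DS := Finset.sum_pos (fun k _ => by exact_mod_cast hDk k) ⟨k0, hk0⟩
    have hDC0 : 0 ≤ DC := Finset.sum_nonneg fun k _ => Nat.cast_nonneg _
    have hsplit : DS + DC = Dtot := by
      rw [hDS, hDC, hDtot]; exact Finset.sum_add_sum_compl _ _
    have hDtotpos : 0 < Dtot := by linarith
    set g : EuclideanSpace ℝ (Fin d) := DS⁻¹ • ∑ k ∈ S t, G k with hg
    have hsumS : ∑ k ∈ S t, (Dk k : ℝ) • gradient (Floc k) u = ∑ k ∈ S t, G k := by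
      apply Finset.sum_congr rfl
      intro k _
      rw [hgradFloc k, smul_smul, mul_inv_cancel₀ (by exact_mod_cast (hDk k).ne'), one_smul]
    have hwt : w t = u - (1 / L) • g := by
      rw [hw t ht1 htT, ← hu, hg, hsumS]
    have hsplitG : ∑ k, G k = ∑ k ∈ S t, G k + ∑ k ∈ (S t)ᶜ, G k :=
      (Finset.sum_add_sum_compl _ _).symm
    have he : g - gradient Fglob u
        = (DS⁻¹ - Dtot⁻¹) • (∑ k ∈ S t, G k) - Dtot⁻¹ • (∑ k ∈ (S t)ᶜ, G k) := by
      rw [hgradF, hg, hsplitG]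
      module
    have hinv : Dtot⁻¹ ≤ DS⁻¹ := by
      apply inv_anti₀ hDSpos
      linarith
    have henorm : ‖g - gradient Fglob u‖ ≤ 2 * B * DC / Dtot := by
      rw [he]
      calc ‖(DS⁻¹ - Dtot⁻¹) • (∑ k ∈ S t, G k) - Dtot⁻¹ • (∑ k ∈ (S t)ᶜ, G k)‖
          ≤ ‖(DS⁻¹ - Dtot⁻¹) • (∑ k ∈ S t, G k)‖ + ‖Dtot⁻¹ • (∑ k ∈ (S t)ᶜ, G k)‖ :=
            norm_sub_le _ _
        _ ≤ (DS⁻¹ - Dtot⁻¹) * (DS * B) + Dtot⁻¹ * (DC * B) := by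
            apply add_le_add
            · rw [norm_smul, Real.norm_eq_abs, abs_of_nonneg (by linarith)]
              exact mul_le_mul_of_nonneg_left (hsumnorm _) (by linarith)
            · rw [norm_smul, Real.norm_eq_abs, abs_of_nonneg (by positivity)]
              exact mul_le_mul_of_nonneg_left (hsumnorm _) (by positivity)
        _ = 2 * B * DC / Dtot := by
            rw [← hsplit]
            field_simp
            ring
    have hne2 : ‖g - gradient Fglob u‖ ^ 2 ≤ 4 * ε * DC ^ 2 / Dtot ^ 2 := by
      calc ‖g - gradient Fglob u‖ ^ 2 ≤ (2 * B * DC / Dtot) ^ 2 :=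
            pow_le_pow_left₀ (norm_nonneg _) henorm 2
        _ = 4 * ε * DC ^ 2 / Dtot ^ 2 := by rw [div_pow, ← hB2]; ring
    have hdesc := descent_lemma' Fglob hFdiff L hlip u (w t)
    have h3 : w t - u = -((1 / L) • g) := by rw [hwt]; abel
    have hdesc' : Fglob (w t) ≤ Fglob u
        - (1 / L) * (inner ℝ (gradient Fglob u) g : ℝ)
        + 1 / (2 * L) * ‖g‖ ^ 2 := by
      rw [h3] at hdesc
      rw [inner_neg_right, real_inner_smul_right, norm_neg, norm_smul, Real.norm_eq_abs,
        abs_of_pos (by positivity : (0:ℝ) < 1 / L), mul_pow] at hdesc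
      have heq : L / 2 * ((1 / L) ^ 2 * ‖g‖ ^ 2) = 1 / (2 * L) * ‖g‖ ^ 2 := by
        field_simp
      linarith
    have hid : ‖g - gradient Fglob u‖ ^ 2
        = ‖g‖ ^ 2 - 2 * (inner ℝ (gradient Fglob u) g : ℝ) + ‖gradient Fglob u‖ ^ 2 := by
      rw [norm_sub_sq_real, real_inner_comm]
    have h2L : (0:ℝ) < 1 / (2 * L) := by positivity
    have hstep : -(1 / L) * (inner ℝ (gradient Fglob u) g : ℝ) + 1 / (2 * L) * ‖g‖ ^ 2
        = 1 / (2 * L) * (‖g - gradient Fglob u‖ ^ 2 - ‖gradient Fglob u‖ ^ 2) := by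
      rw [hid]; ring
    have hpl2 : 1 / (2 * L) * (2 * δ * (Fglob u - Fstar))
        ≤ 1 / (2 * L) * ‖gradient Fglob u‖ ^ 2 :=
      mul_le_mul_of_nonneg_left (hPL u) h2L.le
    have heq2 : 1 / (2 * L) * (2 * δ * (Fglob u - Fstar)) = δ / L * (Fglob u - Fstar) := by
      ring
    have hC : 1 / (2 * L) * ‖g - gradient Fglob u‖ ^ 2
        ≤ 2 * ε / (L * Dtot ^ 2) * DC ^ 2 := by
      have h5 := mul_le_mul_of_nonneg_left hne2 h2L.le
      have h6 : 1 / (2 * L) * (4 * ε * DC ^ 2 / Dtot ^ 2) = 2 * ε / (L * Dtot ^ 2) * DC ^ 2 := by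
        field_simp
        ring
      linarith
    linarith
  -- induction
  have hind : ∀ n, n ≤ T → Fglob (w n) - Fstar ≤ (1 - δ / L) ^ n * (Fglob (w 0) - Fstar)
      + ∑ t ∈ Finset.Icc 1 n,
          ((2 * ε / (L * Dtot ^ 2)) * (∑ k ∈ (S t)ᶜ, (Dk k : ℝ)) ^ 2)
            * (1 - δ / L) ^ (n - t) := by
    intro n
    induction n with
    | zero => intro _; simp
    | succ m ih =>
      intro hm
      have hm' : m ≤ T := Nat.le_of_succ_le hm
      have h1 := key (m + 1) (Nat.succ_le_succ (Nat.zero_le m)) hm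
      simp only [Nat.add_sub_cancel] at h1
      have h2 := ih hm'
      have h3 := mul_le_mul_of_nonneg_left h2 hr0
      rw [Finset.sum_Icc_succ_top (Nat.succ_le_succ (Nat.zero_le m))]
      have h4 : (1 - δ / L) * ∑ t ∈ Finset.Icc 1 m,
            ((2 * ε / (L * Dtot ^ 2)) * (∑ k ∈ (S t)ᶜ, (Dk k : ℝ)) ^ 2)
              * (1 - δ / L) ^ (m - t)
          = ∑ t ∈ Finset.Icc 1 m,
            ((2 * ε / (L * Dtot ^ 2)) * (∑ k ∈ (S t)ᶜ, (Dk k : ℝ)) ^ 2)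
              * (1 - δ / L) ^ (m + 1 - t) := by
        rw [Finset.mul_sum]
        apply Finset.sum_congr rfl
        intro t ht
        have htm : t ≤ m := (Finset.mem_Icc.mp ht).2
        have : m + 1 - t = (m - t) + 1 := by omega
        rw [this, pow_succ]
        ring
      have h5 : m + 1 - (m + 1) = 0 := by omega
      rw [h5, pow_zero, mul_one, pow_succ]
      calc Fglob (w (m + 1)) - Fstar
          ≤ (1 - δ / L) * (Fglob (w m) - Fstar)
            + (2 * ε / (L * Dtot ^ 2)) * (∑ k ∈ (S (m + 1))ᶜ, (Dk k : ℝ)) ^ 2 := h1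
        _ ≤ (1 - δ / L) * ((1 - δ / L) ^ m * (Fglob (w 0) - Fstar)
              + ∑ t ∈ Finset.Icc 1 m,
                  ((2 * ε / (L * Dtot ^ 2)) * (∑ k ∈ (S t)ᶜ, (Dk k : ℝ)) ^ 2)
                    * (1 - δ / L) ^ (m - t))
            + (2 * ε / (L * Dtot ^ 2)) * (∑ k ∈ (S (m + 1))ᶜ, (Dk k : ℝ)) ^ 2 := by
            linarith
        _ = (1 - δ / L) ^ m * (1 - δ / L) * (Fglob (w 0) - Fstar)
            + (∑ t ∈ Finset.Icc 1 m,
                ((2 * ε / (L * Dtot ^ 2)) * (∑ k ∈ (S t)ᶜ, (Dk k : ℝ)) ^ 2)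
                  * (1 - δ / L) ^ (m + 1 - t)
              + (2 * ε / (L * Dtot ^ 2)) * (∑ k ∈ (S (m + 1))ᶜ, (Dk k : ℝ)) ^ 2) := by
            rw [← h4]; ring
  exact hind T le_rfl
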